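/- Let G be a group with elements g₁,…,g₅ and integers t_{ijk} (1 ≤ i < j < k ≤ 5) satisfying the listed commutator relations, and assume additionally t₁₂₃·t₃₄₅ = 0 and t₁₂₄·t₃₄₅ + t₁₄₅·t₂₃₄ = t₁₃₄·t₂₄₅. Then for all integers a₁,…,a₅,b₁,…,b₅ one has (g₁^{a₁}g₂^{a₂}g₃^{a₃}g₄^{a₄}g₅^{a₅})·(g₁^{b₁}g₂^{b₂}g₃^{b₃}g₄^{b₄}g₅^{b₅}) = g₁^{p₁}g₂^{p₂}g₃^{p₃}g₄^{p₄}g₅^{p₅}, where p₁ = a₁+b₁, p₂ = a₂+b₂, p₃ = a₃+b₃+t₁₂₃a₂b₁, p₄ = a₄+b₄+t₁₂₄a₂b₁+t₁₃₄a₃b₁+t₂₃₄a₃b₂+t₁₂₃t₁₃₄a₂s₂(b₁)+t₁₂₃t₂₃₄s₂(a₂)b₁+t₁₂₃t₂₃₄a₂b₁b₂, and p₅ = a₅+b₅+t₃₄₅a₄b₃+t₂₄₅a₄b₂+t₂₃₅a₃b₂+t₁₄₅a₄b₁+t₁₃₅a₃b₁+t₁₂₅a₂b₁+t₂₃₄t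₃₄₅s₂(a₃)b₂+t₂₃₄t₂₄₅a₃s₂(b₂)+t₁₃₄t₃₄₅s₂(a₃)b₁+t₁₃₄t₁₄₅a₃s₂(b₁)+t₂₃₄t₃₄₅a₃b₂b₃+t₁₃₄t₃₄₅a₃b₁b₃+t₁₃₄t₂₄₅a₃b₁b₂+t₁₂₄t₃₄₅a₂b₁b₃+t₁₂₄t₃₄₅a₂a₃b₁+(t₁₂₃t₂₃₅+t₁₂₄t₂₄₅)a₂b₁b₂+(t₁₂₃t₂₃₅+t₁₂₄t₂₄₅)s₂(a₂)b₁+(t₁₂₃t₁₃₅+t₁₂₄t₁₄₅)a₂s₂(b₁)+t₁₂₃t₂₃₄t₂₄₅a₂b₁s₂(b₂)+t₁₂₃t₁₃₄t₂₄₅s₂(a₂)s₂(b₁)+t₁₂₃t₂₃₄t₂₄₅s₃(a₂)b₁+t₁₂₃t₁₃₄t₁₄₅a₂s₃(b₁)+t₁₂₃t₂₃₄t₂₄₅s₂(a₂)b₁b₂+t₁₂₃t₁₃₄t₂₄₅a₂s₂(b₁)b₂. -/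

import Mathlib

/-- `s₂(x) = x(x-1)/2` -/
def s2 (x : ℤ) : ℤ := x * (x - 1) / 2

/-- `s₃(x) = x(x-1)(x-2)/6` -/
def s3 (x : ℤ) : ℤ := x * (x - 1) * (x - 2) / 6

lemma two_mul_s2 (x : ℤ) : 2 * s2 x = x * (x - 1) := by
  have h : (2:ℤ) ∣ x * (x - 1) := by
    rcases Int.even_or_odd x with h | h
    · exact Dvd.dvd.mul_right h.two_dvd _
    · obtain ⟨k, hk⟩ := h
      exact Dvd.dvd.mul_left ⟨k, by omega⟩ _
  exact Int.mul_ediv_cancel' h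

lemma six_dvd (x : ℤ) : (6:ℤ) ∣ x * (x - 1) * (x - 2) := by
  induction x using Int.induction_on with
  | zero => norm_num
  | succ k ih =>
      obtain ⟨c, hc⟩ : (2:ℤ) ∣ (k:ℤ) * ((k:ℤ) - 1) := by
        rcases Int.even_or_odd (k:ℤ) with h | h
        · exact Dvd.dvd.mul_right h.two_dvd _
        · obtain ⟨j, hj⟩ := h
          exact Dvd.dvd.mul_left ⟨j, by omega⟩ _
      obtain ⟨d, hd⟩ := ih
      exact ⟨d + c, by linear_combination hd + 3 * hc⟩
  | pred k ih =>
      obtain ⟨c, hc⟩ : (2:ℤ) ∣ (-(k:ℤ) - 1) * (-(k:ℤ) - 2) := by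
        rcases Int.even_or_odd (-(k:ℤ) - 1) with h | h
        · exact Dvd.dvd.mul_right h.two_dvd _
        · obtain ⟨j, hj⟩ := h
          exact Dvd.dvd.mul_left ⟨j, by omega⟩ _
      obtain ⟨d, hd⟩ := ih
      exact ⟨d - c, by linear_combination hd - 3 * hc⟩

lemma six_mul_s3 (x : ℤ) : 6 * s3 x = x * (x - 1) * (x - 2) :=
  Int.mul_ediv_cancel' (six_dvd x)

lemma s2_zero : s2 0 = 0 := rfl
lemma s2_one : s2 1 = 0 := rfl
lemma s3_zero : s3 0 = 0 := rfl
lemma s2_add_one (x : ℤ) : s2 (x + 1) = s2 x + x :=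
  mul_left_cancel₀ (two_ne_zero) (by linear_combination two_mul_s2 (x+1) - two_mul_s2 x)
lemma s3_add_one (x : ℤ) : s3 (x + 1) = s3 x + s2 x :=
  mul_left_cancel₀ (by norm_num : (6:ℤ) ≠ 0)
    (by linear_combination six_mul_s3 (x+1) - six_mul_s3 x - 3 * two_mul_s2 x)

lemma zpow_ind {G : Type*} [Group G] (s : G) (L R : ℤ → G)
    (hL : ∀ n : ℤ, L (n + 1) = L n * s) (hR : ∀ n : ℤ, R (n + 1) = R n * s)
    (h0 : L 0 = R 0) : ∀ n : ℤ, L n = R n := by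
  intro n
  induction n using Int.induction_on with
  | zero => exact h0
  | succ k ih => rw [hL, hR, ih]
  | pred k ih =>
      have e : (-(k:ℤ) - 1) + 1 = -(k:ℤ) := by ring
      have h1 := hL (-(k:ℤ) - 1); have h2 := hR (-(k:ℤ) - 1)
      rw [e] at h1 h2
      exact mul_right_cancel (h1 ▸ h2 ▸ ih)

lemma nfc {G : Type*} [Group G] (g : G) {a b : ℤ} {x y : G} (ha : a = b) (hx : x = y) :
    g ^ a * x = g ^ b * y := by rw [ha, hx]

lemma nfc5 {G : Type*} [Group G] (g : G) {a b : ℤ} (h : a = b) : g ^ a = g ^ b := by rw [h]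

set_option maxHeartbeats 4000000 in
/-- Hall polynomials for torsion free nilpotent groups of Hirsch length 5:
multiplication of normal forms is given by the polynomials `p₁,…,p₅`. -/
theorem hall_polynomials_length_five (G : Type*) [Group G] (g1 g2 g3 g4 g5 : G)
    (t123 t124 t125 t134 t135 t145 t234 t235 t245 t345 : ℤ)
    (h21 : g2⁻¹ * g1⁻¹ * g2 * g1 = g3 ^ t123 * g4 ^ t124 * g5 ^ t125)
    (h31 : g3⁻¹ * g1⁻¹ * g3 * g1 = g4 ^ t134 * g5 ^ t135)
    (h32 : g3⁻¹ * g2⁻¹ * g3 * g2 = g4 ^ t234 * g5 ^ t235)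
    (h41 : g4⁻¹ * g1⁻¹ * g4 * g1 = g5 ^ t145)
    (h42 : g4⁻¹ * g2⁻¹ * g4 * g2 = g5 ^ t245)
    (h43 : g4⁻¹ * g3⁻¹ * g4 * g3 = g5 ^ t345)
    (h51 : g5⁻¹ * g1⁻¹ * g5 * g1 = 1)
    (h52 : g5⁻¹ * g2⁻¹ * g5 * g2 = 1)
    (h53 : g5⁻¹ * g3⁻¹ * g5 * g3 = 1)
    (h54 : g5⁻¹ * g4⁻¹ * g5 * g4 = 1)
    (hcons1 : t123 * t345 = 0)
    (hcons2 : t124 * t345 + t145 * t234 = t134 * t245) :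
    ∀ a1 a2 a3 a4 a5 b1 b2 b3 b4 b5 : ℤ,
      (g1 ^ a1 * g2 ^ a2 * g3 ^ a3 * g4 ^ a4 * g5 ^ a5) *
        (g1 ^ b1 * g2 ^ b2 * g3 ^ b3 * g4 ^ b4 * g5 ^ b5) =
      g1 ^ (a1 + b1) * g2 ^ (a2 + b2) * g3 ^ (a3 + b3 + t123 * a2 * b1) *
      g4 ^ (a4 + b4 + t124 * a2 * b1 + t134 * a3 * b1 + t234 * a3 * b2
            + t123 * t134 * a2 * s2 b1 + t123 * t234 * s2 a2 * b1
            + t123 * t234 * a2 * b1 * b2) *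
      g5 ^ (a5 + b5
            + t345 * a4 * b3 + t245 * a4 * b2 + t235 * a3 * b2
            + t145 * a4 * b1 + t135 * a3 * b1 + t125 * a2 * b1
            + t234 * t345 * s2 a3 * b2 + t234 * t245 * a3 * s2 b2
            + t134 * t345 * s2 a3 * b1 + t134 * t145 * a3 * s2 b1
            + t234 * t345 * a3 * b2 * b3 + t134 * t345 * a3 * b1 * b3
            + t134 * t245 * a3 * b1 * b2 + t124 * t345 * a2 * b1 * b3
            + t124 * t345 * a2 * a3 * b1
            + (t123 * t235 + t124 * t245) * a2 * b1 * b2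
            + (t123 * t235 + t124 * t245) * s2 a2 * b1
            + (t123 * t135 + t124 * t145) * a2 * s2 b1
            + t123 * t234 * t245 * a2 * b1 * s2 b2
            + t123 * t134 * t245 * s2 a2 * s2 b1
            + t123 * t234 * t245 * s3 a2 * b1
            + t123 * t134 * t145 * a2 * s3 b1
            + t123 * t234 * t245 * s2 a2 * b1 * b2
            + t123 * t134 * t245 * a2 * s2 b1 * b2) := by
  have hc : ∀ a b c : G, b⁻¹ * a⁻¹ * b * a = c → b * a = a * (b * c) := by
    intro a b c h
    calc b * a = a * b * (b⁻¹ * a⁻¹ * b * a) := by group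
    _ = a * b * c := by rw [h]
    _ = a * (b * c) := mul_assoc _ _ _
  have c51 : Commute g5 g1 := by have h := hc g1 g5 1 h51; simp only [mul_one] at h; exact h
  have w51 : ∀ (k l : ℤ), g5 ^ k * g1 ^ l = g1 ^ l * g5 ^ k := fun k l => (c51.zpow_zpow k l).eq
  have w51x : ∀ (k l : ℤ) (x : G), g5 ^ k * (g1 ^ l * x) = g1 ^ l * (g5 ^ k * x) := fun k l x => by
    rw [← mul_assoc, w51, mul_assoc]
  have v51 : ∀ (k : ℤ), g5 ^ k * g1 = g1 * g5 ^ k := fun k => (c51.zpow_left k).eq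
  have v51x : ∀ (k : ℤ) (x : G), g5 ^ k * (g1 * x) = g1 * (g5 ^ k * x) := fun k x => by
    rw [← mul_assoc, v51, mul_assoc]
  have c52 : Commute g5 g2 := by have h := hc g2 g5 1 h52; simp only [mul_one] at h; exact h
  have w52 : ∀ (k l : ℤ), g5 ^ k * g2 ^ l = g2 ^ l * g5 ^ k := fun k l => (c52.zpow_zpow k l).eq
  have w52x : ∀ (k l : ℤ) (x : G), g5 ^ k * (g2 ^ l * x) = g2 ^ l * (g5 ^ k * x) := fun k l x => by
    rw [← mul_assoc, w52, mul_assoc]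
  have v52 : ∀ (k : ℤ), g5 ^ k * g2 = g2 * g5 ^ k := fun k => (c52.zpow_left k).eq
  have v52x : ∀ (k : ℤ) (x : G), g5 ^ k * (g2 * x) = g2 * (g5 ^ k * x) := fun k x => by
    rw [← mul_assoc, v52, mul_assoc]
  have c53 : Commute g5 g3 := by have h := hc g3 g5 1 h53; simp only [mul_one] at h; exact h
  have w53 : ∀ (k l : ℤ), g5 ^ k * g3 ^ l = g3 ^ l * g5 ^ k := fun k l => (c53.zpow_zpow k l).eq
  have w53x : ∀ (k l : ℤ) (x : G), g5 ^ k * (g3 ^ l * x) = g3 ^ l * (g5 ^ k * x) := fun k l x => by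
    rw [← mul_assoc, w53, mul_assoc]
  have v53 : ∀ (k : ℤ), g5 ^ k * g3 = g3 * g5 ^ k := fun k => (c53.zpow_left k).eq
  have v53x : ∀ (k : ℤ) (x : G), g5 ^ k * (g3 * x) = g3 * (g5 ^ k * x) := fun k x => by
    rw [← mul_assoc, v53, mul_assoc]
  have c54 : Commute g5 g4 := by have h := hc g4 g5 1 h54; simp only [mul_one] at h; exact h
  have w54 : ∀ (k l : ℤ), g5 ^ k * g4 ^ l = g4 ^ l * g5 ^ k := fun k l => (c54.zpow_zpow k l).eq
  have w54x : ∀ (k l : ℤ) (x : G), g5 ^ k * (g4 ^ l * x) = g4 ^ l * (g5 ^ k * x) := fun k l x => by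
    rw [← mul_assoc, w54, mul_assoc]
  have v54 : ∀ (k : ℤ), g5 ^ k * g4 = g4 * g5 ^ k := fun k => (c54.zpow_left k).eq
  have v54x : ∀ (k : ℤ) (x : G), g5 ^ k * (g4 * x) = g4 * (g5 ^ k * x) := fun k x => by
    rw [← mul_assoc, v54, mul_assoc]
  have mg : ∀ (a : G) (k l : ℤ), a ^ k * a ^ l = a ^ (k + l) := fun a k l => (zpow_add a k l).symm
  have mgx : ∀ (a : G) (k l : ℤ) (x : G), a ^ k * (a ^ l * x) = a ^ (k + l) * x := fun a k l x => by
    rw [← mul_assoc, ← zpow_add]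
  have mgb : ∀ (a : G) (k : ℤ), a ^ k * a = a ^ (k + 1) := fun a k => (zpow_add_one a k).symm
  have mgbx : ∀ (a : G) (k : ℤ) (x : G), a ^ k * (a * x) = a ^ (k + 1) * x := fun a k x => by
    rw [← mul_assoc, mgb]
  have e41 : g4 * g1 = g1 * (g4 * g5 ^ t145) := hc g1 g4 _ h41
  have e42 : g4 * g2 = g2 * (g4 * g5 ^ t245) := hc g2 g4 _ h42
  have e43 : g4 * g3 = g3 * (g4 * g5 ^ t345) := hc g3 g4 _ h43
  have e31 : g3 * g1 = g1 * (g3 * (g4 ^ t134 * g5 ^ t135)) := by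
    simpa only [mul_assoc] using hc g1 g3 _ h31
  have e32 : g3 * g2 = g2 * (g3 * (g4 ^ t234 * g5 ^ t235)) := by
    simpa only [mul_assoc] using hc g2 g3 _ h32
  have e21 : g2 * g1 = g1 * (g2 * (g3 ^ t123 * (g4 ^ t124 * g5 ^ t125))) := by
    simpa only [mul_assoc] using hc g1 g2 _ h21
  have A41 : ∀ m : ℤ, g4 ^ m * g1 = g1 * (g4 ^ m * g5 ^ (t145 * m)) := by
    intro m
    have sc : SemiconjBy g1 (g4 * g5 ^ t145) g4 := e41.symm
    have h2 : g1 * (g4 * g5 ^ t145) ^ m = g4 ^ m * g1 := sc.zpow_right m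
    have h3 : (g4 * g5 ^ t145) ^ m = g4 ^ m * (g5 ^ t145) ^ m := (c54.symm.zpow_right t145).mul_zpow m
    rw [← h2, h3, ← zpow_mul]
  have A41x : ∀ (m : ℤ) (x : G), g4 ^ m * (g1 * x) = g1 * ((g4 ^ m * g5 ^ (t145 * m)) * x) := fun m x => by
    rw [← mul_assoc, A41, mul_assoc]
  have sw41 : ∀ m n : ℤ, g4 ^ m * g1 ^ n = g1 ^ n * (g4 ^ m * g5 ^ (t145 * m * n)) := by
    intro m
    refine zpow_ind g1 (fun n => g4 ^ m * g1 ^ n)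
      (fun n => g1 ^ n * (g4 ^ m * g5 ^ (t145 * m * n))) ?_ ?_ (by simp)
    · intro n; show g4 ^ m * g1 ^ (n + 1) = g4 ^ m * g1 ^ n * g1
      rw [zpow_add_one, ← mul_assoc]
    · intro n
      show g1 ^ (n + 1) * (g4 ^ m * g5 ^ (t145 * m * (n + 1))) = g1 ^ n * (g4 ^ m * g5 ^ (t145 * m * n)) * g1
      simp only [mul_assoc, mgx, mg, mgbx, mgb, v51x, v51, A41x, A41]
      ring_nf
  have sw41x : ∀ (m n : ℤ) (x : G), g4 ^ m * (g1 ^ n * x) = g1 ^ n * ((g4 ^ m * g5 ^ (t145 * m * n)) * x) := fun m n x => by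
    rw [← mul_assoc, sw41, mul_assoc]
  have A42 : ∀ m : ℤ, g4 ^ m * g2 = g2 * (g4 ^ m * g5 ^ (t245 * m)) := by
    intro m
    have sc : SemiconjBy g2 (g4 * g5 ^ t245) g4 := e42.symm
    have h2 : g2 * (g4 * g5 ^ t245) ^ m = g4 ^ m * g2 := sc.zpow_right m
    have h3 : (g4 * g5 ^ t245) ^ m = g4 ^ m * (g5 ^ t245) ^ m := (c54.symm.zpow_right t245).mul_zpow m
    rw [← h2, h3, ← zpow_mul]
  have A42x : ∀ (m : ℤ) (x : G), g4 ^ m * (g2 * x) = g2 * ((g4 ^ m * g5 ^ (t245 * m)) * x) := fun m x => by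
    rw [← mul_assoc, A42, mul_assoc]
  have sw42 : ∀ m n : ℤ, g4 ^ m * g2 ^ n = g2 ^ n * (g4 ^ m * g5 ^ (t245 * m * n)) := by
    intro m
    refine zpow_ind g2 (fun n => g4 ^ m * g2 ^ n)
      (fun n => g2 ^ n * (g4 ^ m * g5 ^ (t245 * m * n))) ?_ ?_ (by simp)
    · intro n; show g4 ^ m * g2 ^ (n + 1) = g4 ^ m * g2 ^ n * g2
      rw [zpow_add_one, ← mul_assoc]
    · intro n
      show g2 ^ (n + 1) * (g4 ^ m * g5 ^ (t245 * m * (n + 1))) = g2 ^ n * (g4 ^ m * g5 ^ (t245 * m * n)) * g2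
      simp only [mul_assoc, mgx, mg, mgbx, mgb, v52x, v52, A42x, A42]
      ring_nf
  have sw42x : ∀ (m n : ℤ) (x : G), g4 ^ m * (g2 ^ n * x) = g2 ^ n * ((g4 ^ m * g5 ^ (t245 * m * n)) * x) := fun m n x => by
    rw [← mul_assoc, sw42, mul_assoc]
  have A43 : ∀ m : ℤ, g4 ^ m * g3 = g3 * (g4 ^ m * g5 ^ (t345 * m)) := by
    intro m
    have sc : SemiconjBy g3 (g4 * g5 ^ t345) g4 := e43.symm
    have h2 : g3 * (g4 * g5 ^ t345) ^ m = g4 ^ m * g3 := sc.zpow_right m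
    have h3 : (g4 * g5 ^ t345) ^ m = g4 ^ m * (g5 ^ t345) ^ m := (c54.symm.zpow_right t345).mul_zpow m
    rw [← h2, h3, ← zpow_mul]
  have A43x : ∀ (m : ℤ) (x : G), g4 ^ m * (g3 * x) = g3 * ((g4 ^ m * g5 ^ (t345 * m)) * x) := fun m x => by
    rw [← mul_assoc, A43, mul_assoc]
  have sw43 : ∀ m n : ℤ, g4 ^ m * g3 ^ n = g3 ^ n * (g4 ^ m * g5 ^ (t345 * m * n)) := by
    intro m
    refine zpow_ind g3 (fun n => g4 ^ m * g3 ^ n)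
      (fun n => g3 ^ n * (g4 ^ m * g5 ^ (t345 * m * n))) ?_ ?_ (by simp)
    · intro n; show g4 ^ m * g3 ^ (n + 1) = g4 ^ m * g3 ^ n * g3
      rw [zpow_add_one, ← mul_assoc]
    · intro n
      show g3 ^ (n + 1) * (g4 ^ m * g5 ^ (t345 * m * (n + 1))) = g3 ^ n * (g4 ^ m * g5 ^ (t345 * m * n)) * g3
      simp only [mul_assoc, mgx, mg, mgbx, mgb, v53x, v53, A43x, A43]
      ring_nf
  have sw43x : ∀ (m n : ℤ) (x : G), g4 ^ m * (g3 ^ n * x) = g3 ^ n * ((g4 ^ m * g5 ^ (t345 * m * n)) * x) := fun m n x => by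
    rw [← mul_assoc, sw43, mul_assoc]
  have P31 : ∀ m : ℤ, (g3 * (g4 ^ t134 * g5 ^ t135)) ^ m
      = g3 ^ m * (g4 ^ (t134 * m) * g5 ^ (t135 * m + t134 * t345 * s2 m)) := by
    refine zpow_ind (g3 * (g4 ^ t134 * g5 ^ t135)) (fun m => (g3 * (g4 ^ t134 * g5 ^ t135)) ^ m)
      (fun m => g3 ^ m * (g4 ^ (t134 * m) * g5 ^ (t135 * m + t134 * t345 * s2 m))) ?_ ?_ (by simp [s2_zero])
    · intro m; exact zpow_add_one _ m
    · intro m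
      show g3 ^ (m + 1) * (g4 ^ (t134 * (m + 1)) * g5 ^ (t135 * (m + 1) + t134 * t345 * s2 (m + 1)))
        = g3 ^ m * (g4 ^ (t134 * m) * g5 ^ (t135 * m + t134 * t345 * s2 m)) * (g3 * (g4 ^ t134 * g5 ^ t135))
      simp only [mul_assoc, mgx, mg, mgbx, mgb, w51x, w51, v51x, v51, w52x, w52, v52x, v52, w53x, w53, v53x, v53, w54x, w54, v54x, v54, sw41x, sw41, A41x, A41, sw42x, sw42, A42x, A42, sw43x, sw43, A43x, A43]
      simp only [s2_add_one]
      ring_nf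
  have A31 : ∀ m : ℤ, g3 ^ m * g1
      = g1 * (g3 ^ m * (g4 ^ (t134 * m) * g5 ^ (t135 * m + t134 * t345 * s2 m))) := by
    intro m
    have sc : SemiconjBy g1 (g3 * (g4 ^ t134 * g5 ^ t135)) g3 := e31.symm
    have h2 : g1 * (g3 * (g4 ^ t134 * g5 ^ t135)) ^ m = g3 ^ m * g1 := sc.zpow_right m
    rw [← h2, P31]
  have A31x : ∀ (m : ℤ) (x : G), g3 ^ m * (g1 * x)
      = g1 * ((g3 ^ m * (g4 ^ (t134 * m) * g5 ^ (t135 * m + t134 * t345 * s2 m))) * x) := fun m x => by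
    rw [← mul_assoc, A31, mul_assoc]
  have sw31 : ∀ m n : ℤ, g3 ^ m * g1 ^ n
      = g1 ^ n * (g3 ^ m * (g4 ^ (t134 * m * n) * g5 ^ (t135 * m * n + t134 * t345 * s2 m * n + t134 * t145 * m * s2 n))) := by
    intro m
    refine zpow_ind g1 (fun n => g3 ^ m * g1 ^ n)
      (fun n => g1 ^ n * (g3 ^ m * (g4 ^ (t134 * m * n) * g5 ^ (t135 * m * n + t134 * t345 * s2 m * n + t134 * t145 * m * s2 n)))) ?_ ?_ (by simp [s2_zero])
    · intro n; show g3 ^ m * g1 ^ (n + 1) = g3 ^ m * g1 ^ n * g1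
      rw [zpow_add_one, ← mul_assoc]
    · intro n
      show g1 ^ (n + 1) * (g3 ^ m * (g4 ^ (t134 * m * (n + 1)) * g5 ^ (t135 * m * (n + 1) + t134 * t345 * s2 m * (n + 1) + t134 * t145 * m * s2 (n + 1))))
        = g1 ^ n * (g3 ^ m * (g4 ^ (t134 * m * n) * g5 ^ (t135 * m * n + t134 * t345 * s2 m * n + t134 * t145 * m * s2 n))) * g1
      simp only [mul_assoc, mgx, mg, mgbx, mgb, w51x, w51, v51x, v51, w52x, w52, v52x, v52, w53x, w53, v53x, v53, w54x, w54, v54x, v54, sw41x, sw41, A41x, A41, sw42x, sw42, A42x, A42, sw43x, sw43, A43x, A43, A31x, A31]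
      simp only [s2_add_one]
      ring_nf
  have sw31x : ∀ (m n : ℤ) (x : G), g3 ^ m * (g1 ^ n * x)
      = g1 ^ n * ((g3 ^ m * (g4 ^ (t134 * m * n) * g5 ^ (t135 * m * n + t134 * t345 * s2 m * n + t134 * t145 * m * s2 n))) * x) := fun m n x => by
    rw [← mul_assoc, sw31, mul_assoc]
  have P32 : ∀ m : ℤ, (g3 * (g4 ^ t234 * g5 ^ t235)) ^ m
      = g3 ^ m * (g4 ^ (t234 * m) * g5 ^ (t235 * m + t234 * t345 * s2 m)) := by
    refine zpow_ind (g3 * (g4 ^ t234 * g5 ^ t235)) (fun m => (g3 * (g4 ^ t234 * g5 ^ t235)) ^ m)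
      (fun m => g3 ^ m * (g4 ^ (t234 * m) * g5 ^ (t235 * m + t234 * t345 * s2 m))) ?_ ?_ (by simp [s2_zero])
    · intro m; exact zpow_add_one _ m
    · intro m
      show g3 ^ (m + 1) * (g4 ^ (t234 * (m + 1)) * g5 ^ (t235 * (m + 1) + t234 * t345 * s2 (m + 1)))
        = g3 ^ m * (g4 ^ (t234 * m) * g5 ^ (t235 * m + t234 * t345 * s2 m)) * (g3 * (g4 ^ t234 * g5 ^ t235))
      simp only [mul_assoc, mgx, mg, mgbx, mgb, w51x, w51, v51x, v51, w52x, w52, v52x, v52, w53x, w53, v53x, v53, w54x, w54, v54x, v54, sw41x, sw41, A41x, A41, sw42x, sw42, A42x, A42, sw43x, sw43, A43x, A43]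
      simp only [s2_add_one]
      ring_nf
  have A32 : ∀ m : ℤ, g3 ^ m * g2
      = g2 * (g3 ^ m * (g4 ^ (t234 * m) * g5 ^ (t235 * m + t234 * t345 * s2 m))) := by
    intro m
    have sc : SemiconjBy g2 (g3 * (g4 ^ t234 * g5 ^ t235)) g3 := e32.symm
    have h2 : g2 * (g3 * (g4 ^ t234 * g5 ^ t235)) ^ m = g3 ^ m * g2 := sc.zpow_right m
    rw [← h2, P32]
  have A32x : ∀ (m : ℤ) (x : G), g3 ^ m * (g2 * x)
      = g2 * ((g3 ^ m * (g4 ^ (t234 * m) * g5 ^ (t235 * m + t234 * t345 * s2 m))) * x) := fun m x => by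
    rw [← mul_assoc, A32, mul_assoc]
  have sw32 : ∀ m n : ℤ, g3 ^ m * g2 ^ n
      = g2 ^ n * (g3 ^ m * (g4 ^ (t234 * m * n) * g5 ^ (t235 * m * n + t234 * t345 * s2 m * n + t234 * t245 * m * s2 n))) := by
    intro m
    refine zpow_ind g2 (fun n => g3 ^ m * g2 ^ n)
      (fun n => g2 ^ n * (g3 ^ m * (g4 ^ (t234 * m * n) * g5 ^ (t235 * m * n + t234 * t345 * s2 m * n + t234 * t245 * m * s2 n)))) ?_ ?_ (by simp [s2_zero])
    · intro n; show g3 ^ m * g2 ^ (n + 1) = g3 ^ m * g2 ^ n * g2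
      rw [zpow_add_one, ← mul_assoc]
    · intro n
      show g2 ^ (n + 1) * (g3 ^ m * (g4 ^ (t234 * m * (n + 1)) * g5 ^ (t235 * m * (n + 1) + t234 * t345 * s2 m * (n + 1) + t234 * t245 * m * s2 (n + 1))))
        = g2 ^ n * (g3 ^ m * (g4 ^ (t234 * m * n) * g5 ^ (t235 * m * n + t234 * t345 * s2 m * n + t234 * t245 * m * s2 n))) * g2
      simp only [mul_assoc, mgx, mg, mgbx, mgb, w51x, w51, v51x, v51, w52x, w52, v52x, v52, w53x, w53, v53x, v53, w54x, w54, v54x, v54, sw41x, sw41, A41x, A41, sw42x, sw42, A42x, A42, sw43x, sw43, A43x, A43, A32x, A32]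
      simp only [s2_add_one]
      ring_nf
  have sw32x : ∀ (m n : ℤ) (x : G), g3 ^ m * (g2 ^ n * x)
      = g2 ^ n * ((g3 ^ m * (g4 ^ (t234 * m * n) * g5 ^ (t235 * m * n + t234 * t345 * s2 m * n + t234 * t245 * m * s2 n))) * x) := fun m n x => by
    rw [← mul_assoc, sw32, mul_assoc]
  have P21 : ∀ m : ℤ, (g2 * (g3 ^ t123 * (g4 ^ t124 * g5 ^ t125))) ^ m
      = g2 ^ m * (g3 ^ (t123 * m) * (g4 ^ (t124 * m + t123 * t234 * s2 m) * g5 ^ (t125 * m + (t123 * t235 + t124 * t245) * s2 m + t123 * t234 * t245 * s3 m))) := by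
    refine zpow_ind (g2 * (g3 ^ t123 * (g4 ^ t124 * g5 ^ t125))) _
      (fun m => g2 ^ m * (g3 ^ (t123 * m) * (g4 ^ (t124 * m + t123 * t234 * s2 m) * g5 ^ (t125 * m + (t123 * t235 + t124 * t245) * s2 m + t123 * t234 * t245 * s3 m)))) ?_ ?_ (by simp [s2_zero, s3_zero])
    · intro m; exact zpow_add_one _ m
    · intro m
      show g2 ^ (m + 1) * (g3 ^ (t123 * (m + 1)) * (g4 ^ (t124 * (m + 1) + t123 * t234 * s2 (m + 1)) * g5 ^ (t125 * (m + 1) + (t123 * t235 + t124 * t245) * s2 (m + 1) + t123 * t234 * t245 * s3 (m + 1))))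
        = g2 ^ m * (g3 ^ (t123 * m) * (g4 ^ (t124 * m + t123 * t234 * s2 m) * g5 ^ (t125 * m + (t123 * t235 + t124 * t245) * s2 m + t123 * t234 * t245 * s3 m))) * (g2 * (g3 ^ t123 * (g4 ^ t124 * g5 ^ t125)))
      rcases mul_eq_zero.mp hcons1 with hz | hz <;> subst hz <;>
        simp only [mul_assoc, mgx, mg, mgbx, mgb, w51x, w51, v51x, v51, w52x, w52, v52x, v52, w53x, w53, v53x, v53, w54x, w54, v54x, v54, sw41x, sw41, A41x, A41, sw42x, sw42, A42x, A42, sw43x, sw43, A43x, A43, sw31x, sw31, A31x, A31, sw32x, sw32, A32x, A32] <;>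
        simp only [s2_add_one, s3_add_one, s2_one, zero_mul, mul_zero, s2_zero, s3_zero] <;>
        ring_nf
  have A21 : ∀ m : ℤ, g2 ^ m * g1
      = g1 * (g2 ^ m * (g3 ^ (t123 * m) * (g4 ^ (t124 * m + t123 * t234 * s2 m) * g5 ^ (t125 * m + (t123 * t235 + t124 * t245) * s2 m + t123 * t234 * t245 * s3 m)))) := by
    intro m
    have sc : SemiconjBy g1 (g2 * (g3 ^ t123 * (g4 ^ t124 * g5 ^ t125))) g2 := e21.symm
    have h2 : g1 * (g2 * (g3 ^ t123 * (g4 ^ t124 * g5 ^ t125))) ^ m = g2 ^ m * g1 := sc.zpow_right m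
    rw [← h2, P21]
  have A21x : ∀ (m : ℤ) (x : G), g2 ^ m * (g1 * x)
      = g1 * ((g2 ^ m * (g3 ^ (t123 * m) * (g4 ^ (t124 * m + t123 * t234 * s2 m) * g5 ^ (t125 * m + (t123 * t235 + t124 * t245) * s2 m + t123 * t234 * t245 * s3 m)))) * x) := fun m x => by
    rw [← mul_assoc, A21, mul_assoc]
  have sw21 : ∀ m n : ℤ, g2 ^ m * g1 ^ n
      = g1 ^ n * (g2 ^ m * (g3 ^ (t123 * m * n) * (g4 ^ (t124 * m * n + t123 * t234 * s2 m * n + t123 * t134 * m * s2 n) * g5 ^ (t125 * m * n + (t123 * t235 + t124 * t245) * s2 m * n + (t123 * t135 + t124 * t145) * m * s2 n + t123 * t234 * t245 * s3 m * n + t123 * t134 * t145 * m * s3 n + t123 * t134 * t245 * s2 m * s2 n)))) := by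
    intro m
    refine zpow_ind g1 (fun n => g2 ^ m * g1 ^ n)
      (fun n => g1 ^ n * (g2 ^ m * (g3 ^ (t123 * m * n) * (g4 ^ (t124 * m * n + t123 * t234 * s2 m * n + t123 * t134 * m * s2 n) * g5 ^ (t125 * m * n + (t123 * t235 + t124 * t245) * s2 m * n + (t123 * t135 + t124 * t145) * m * s2 n + t123 * t234 * t245 * s3 m * n + t123 * t134 * t145 * m * s3 n + t123 * t134 * t245 * s2 m * s2 n))))) ?_ ?_ (by simp [s2_zero, s3_zero])
    · intro n; show g2 ^ m * g1 ^ (n + 1) = g2 ^ m * g1 ^ n * g1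
      rw [zpow_add_one, ← mul_assoc]
    · intro n
      show g1 ^ (n + 1) * (g2 ^ m * (g3 ^ (t123 * m * (n + 1)) * (g4 ^ (t124 * m * (n + 1) + t123 * t234 * s2 m * (n + 1) + t123 * t134 * m * s2 (n + 1)) * g5 ^ (t125 * m * (n + 1) + (t123 * t235 + t124 * t245) * s2 m * (n + 1) + (t123 * t135 + t124 * t145) * m * s2 (n + 1) + t123 * t234 * t245 * s3 m * (n + 1) + t123 * t134 * t145 * m * s3 (n + 1) + t123 * t134 * t245 * s2 m * s2 (n + 1)))))
        = g1 ^ n * (g2 ^ m * (g3 ^ (t123 * m * n) * (g4 ^ (t124 * m * n + t123 * t234 * s2 m * n + t123 * t134 * m * s2 n) * g5 ^ (t125 * m * n + (t123 * t235 + t124 * t245) * s2 m * n + (t123 * t135 + t124 * t145) * m * s2 n + t123 * t234 * t245 * s3 m * n + t123 * t134 * t145 * m * s3 n + t123 * t134 * t245 * s2 m * s2 n)))) * g1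
      rcases mul_eq_zero.mp hcons1 with hz | hz
      · subst hz
        simp only [mul_assoc, mgx, mg, mgbx, mgb, w51x, w51, v51x, v51, w52x, w52, v52x, v52, w53x, w53, v53x, v53, w54x, w54, v54x, v54, sw41x, sw41, A41x, A41, sw42x, sw42, A42x, A42, sw43x, sw43, A43x, A43, sw31x, sw31, A31x, A31, sw32x, sw32, A32x, A32, A21x, A21]
        simp only [s2_add_one, s3_add_one, s2_one, zero_mul, mul_zero, s2_zero, s3_zero]
        ring_nf
      · subst hz
        simp only [mul_assoc, mgx, mg, mgbx, mgb, w51x, w51, v51x, v51, w52x, w52, v52x, v52, w53x, w53, v53x, v53, w54x, w54, v54x, v54, sw41x, sw41, A41x, A41, sw42x, sw42, A42x, A42, sw43x, sw43, A43x, A43, sw31x, sw31, A31x, A31, sw32x, sw32, A32x, A32, A21x, A21]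
        simp only [s2_add_one, s3_add_one, s2_one, zero_mul, mul_zero, s2_zero, s3_zero]
        refine nfc _ (by ring) (nfc _ (by ring) (nfc _ (by ring) (nfc _ (by ring) (nfc5 _ (by
          linear_combination (-(n * t123 * s2 m)) * hcons2)))))
  have sw21x : ∀ (m n : ℤ) (x : G), g2 ^ m * (g1 ^ n * x)
      = g1 ^ n * ((g2 ^ m * (g3 ^ (t123 * m * n) * (g4 ^ (t124 * m * n + t123 * t234 * s2 m * n + t123 * t134 * m * s2 n) * g5 ^ (t125 * m * n + (t123 * t235 + t124 * t245) * s2 m * n + (t123 * t135 + t124 * t145) * m * s2 n + t123 * t234 * t245 * s3 m * n + t123 * t134 * t145 * m * s3 n + t123 * t134 * t245 * s2 m * s2 n)))) * x) := fun m n x => by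
    rw [← mul_assoc, sw21, mul_assoc]
  intro a1 a2 a3 a4 a5 b1 b2 b3 b4 b5
  rcases mul_eq_zero.mp hcons1 with hz | hz <;> subst hz <;>
    simp only [mul_assoc, mgx, mg, mgbx, mgb, w51x, w51, v51x, v51, w52x, w52, v52x, v52, w53x, w53, v53x, v53, w54x, w54, v54x, v54, sw41x, sw41, A41x, A41, sw42x, sw42, A42x, A42, sw43x, sw43, A43x, A43, sw31x, sw31, A31x, A31, sw32x, sw32, A32x, A32, sw21x, sw21, A21x, A21] <;>
    simp only [s2_add_one, s3_add_one, s2_one, zero_mul, mul_zero, s2_zero, s3_zero] <;>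
    ring_nf
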